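/- Let G be a full-integer labeled unbounded granularity such that ⊥ groups periodically into G with period length P_G and period label distance N_G, let m be a positive integer, and let G' = Group_m(G). Then ⊥ groups periodically into G' with period length P_{G'} = (P_G · m)/gcd(m, N_G) and period label distance N_{G'} = N_G/gcd(m, N_G). -/

import Mathlib

/-- A labeled granularity over a linearly ordered time domain `T`:
a label set `labels ⊆ ℤ` and a map `gran` assigning to each label a granule
(a subset of `T`); granules are empty outside the label set, granules with
larger labels come later, and between two non-empty granules all granules
(with label in the label set) are non-empty. -/
structure Granularity (T : Type*) [LinearOrder T] where
  labels : Set ℤ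
  gran : ℤ → Set T
  empty_outside : ∀ i, i ∉ labels → gran i = ∅
  mono : ∀ i ∈ labels, ∀ j ∈ labels, i < j → (gran i).Nonempty → (gran j).Nonempty →
    ∀ x ∈ gran i, ∀ y ∈ gran j, x < y
  no_gaps : ∀ i ∈ labels, ∀ j ∈ labels, i < j → (gran i).Nonempty → (gran j).Nonempty →
    ∀ k ∈ labels, i < k → k < j → (gran k).Nonempty

variable {T : Type*} [LinearOrder T]

/-- `G` is full-integer labeled. -/
def FullInteger (G : Granularity T) : Prop := G.labels = Set.univ

/-- `G` is unbounded: the label set has no least and no greatest element, and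
no granule of `G` is empty. -/
def Unbounded (G : Granularity T) : Prop :=
  (∀ i ∈ G.labels, ∃ j ∈ G.labels, j < i) ∧
  (∀ i ∈ G.labels, ∃ j ∈ G.labels, i < j) ∧
  (∀ i ∈ G.labels, (G.gran i).Nonempty)

/-- `G` groups into `H`: every non-empty granule of `H` is a union of granules of `G`. -/
def GroupsInto (G H : Granularity T) : Prop :=
  ∀ j ∈ H.labels, (H.gran j).Nonempty →
    ∃ S ⊆ G.labels, H.gran j = ⋃ i ∈ S, G.gran i

/-- `G` groups periodically into `H` with period length `P` and
period label distance `N`. -/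
def GroupsPeriodicallyInto (G H : Granularity T) (P N : ℤ) : Prop :=
  GroupsInto G H ∧ 0 < P ∧ 0 < N ∧
  (∀ i ∈ H.labels, i + N ∈ H.labels ∨ ∃ g, IsGreatest H.labels g ∧ g < i + N) ∧
  (∀ i ∈ H.labels, ∀ k : ℕ, ∀ j : ℕ → ℤ,
    (∀ r ≤ k, j r ∈ G.labels) →
    H.gran i = ⋃ r ∈ Finset.range (k + 1), G.gran (j r) →
    i + N ∈ H.labels → (H.gran (i + N)).Nonempty →
    (∀ r ≤ k, j r + P ∈ G.labels) ∧
      H.gran (i + N) = ⋃ r ∈ Finset.range (k + 1), G.gran (j r + P)) ∧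
  (∀ s, IsLeast {i | i ∈ H.labels ∧ (H.gran i).Nonempty} s →
    s + N ∈ H.labels ∧ (H.gran (s + N)).Nonempty)

/-- `B` is a bottom granularity: full-integer labeled with all granules non-empty.
(That it groups into the granularities under consideration is stated separately.) -/
def IsBottom (B : Granularity T) : Prop :=
  B.labels = Set.univ ∧ ∀ i, (B.gran i).Nonempty

/-- `up(z)_G^H = z'`: `z'` is the unique label of `H` whose granule contains `G(z)`. -/
def UpDef (G H : Granularity T) (z z' : ℤ) : Prop :=
  z ∈ G.labels ∧ z' ∈ H.labels ∧ G.gran z ⊆ H.gran z' ∧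
  ∀ w ∈ H.labels, G.gran z ⊆ H.gran w → w = z'

/-- `l_G = lG`: `lG = up(i)_⊥^G` where `i` is the smallest positive integer for
which `up(i)_⊥^G` is defined (`B` plays the role of `⊥`). -/
def IsFirstLabel (B G : Granularity T) (lG : ℤ) : Prop :=
  ∃ i : ℤ, 0 < i ∧ UpDef B G i lG ∧
    ∀ i', 0 < i' → (∃ z', UpDef B G i' z') → i ≤ i'

/-- `L̂_G^P`: the set of labels `i ∈ L_G` such that `⊥(n) ⊆ G(i)` for some
`n` with `1 ≤ n ≤ P` (`B` plays the role of `⊥`). -/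
def LHat (B G : Granularity T) (P : ℤ) : Set ℤ :=
  {i | i ∈ G.labels ∧ ∃ n : ℤ, 1 ≤ n ∧ n ≤ P ∧ B.gran n ⊆ G.gran i}

/-- `G` is finer than `H`: every granule of `G` is contained in some granule of `H`. -/
def FinerThan (G H : Granularity T) : Prop :=
  ∀ i ∈ G.labels, ∃ j ∈ H.labels, G.gran i ⊆ H.gran j

/-- `G` partitions `H`. -/
def Partitions (G H : Granularity T) : Prop :=
  GroupsInto G H ∧ FinerThan G H

/-- `G₁` is a label-aligned subgranularity of `G₂`. -/
def LabelAlignedSub (G₁ G₂ : Granularity T) : Prop :=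
  G₁.labels ⊆ G₂.labels ∧ ∀ i ∈ G₁.labels, (G₁.gran i).Nonempty → G₁.gran i = G₂.gran i

/-- `Δ_k^l(S)`: the elements of the ordered set `S` occupying positions
`k, k+1, …, k+l−1`, positions counted (1-based) from the first element when
`k > 0` and (negatively, `-1`-based) from the last element backwards when `k < 0`. -/
def Delta (k l : ℤ) (S : Set ℤ) : Set ℤ :=
  {a ∈ S | ∃ p : ℤ,
    ((0 < k ∧ 1 ≤ p ∧ {x ∈ S | x ≤ a}.Finite ∧ ({x ∈ S | x ≤ a}.ncard : ℤ) = p) ∨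
     (k < 0 ∧ p ≤ -1 ∧ {x ∈ S | a ≤ x}.Finite ∧ ({x ∈ S | a ≤ x}.ncard : ℤ) = -p)) ∧
    k ≤ p ∧ p ≤ k + l - 1}

/-- Auxiliary: granules of a full, everywhere-nonempty granularity are pairwise disjoint. -/
lemma gran_disjoint_aux (X : Granularity T) (hfull : X.labels = Set.univ)
    (hne : ∀ i, (X.gran i).Nonempty) {s s' : ℤ} {x : T}
    (hx : x ∈ X.gran s) (hx' : x ∈ X.gran s') : s = s' := by
  by_contra h
  rcases lt_or_gt_of_ne h with hlt | hlt
  · exact absurd (X.mono s (by simp [hfull]) s' (by simp [hfull]) hlt (hne s) (hne s')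
      x hx x hx') (lt_irrefl x)
  · exact absurd (X.mono s' (by simp [hfull]) s (by simp [hfull]) hlt (hne s') (hne s)
      x hx' x hx) (lt_irrefl x)

/-- Auxiliary: iterating the periodic-shift clause `n` times. -/
lemma shift_iter_aux (B G : Granularity T) (PG NG : ℤ)
    (hBfull : B.labels = Set.univ) (hGfull : G.labels = Set.univ)
    (hGne : ∀ t : ℤ, (G.gran t).Nonempty)
    (h5 : ∀ i ∈ G.labels, ∀ k : ℕ, ∀ j : ℕ → ℤ,
      (∀ r ≤ k, j r ∈ B.labels) →
      G.gran i = ⋃ r ∈ Finset.range (k + 1), B.gran (j r) →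
      i + NG ∈ G.labels → (G.gran (i + NG)).Nonempty →
      (∀ r ≤ k, j r + PG ∈ B.labels) ∧
        G.gran (i + NG) = ⋃ r ∈ Finset.range (k + 1), B.gran (j r + PG))
    (n : ℕ) (t : ℤ) (k : ℕ) (j : ℕ → ℤ)
    (hdec : G.gran t = ⋃ r ∈ Finset.range (k + 1), B.gran (j r)) :
    G.gran (t + n * NG) = ⋃ r ∈ Finset.range (k + 1), B.gran (j r + n * PG) := by
  induction n with
  | zero => simpa using hdec
  | succ n ih =>
    have h := (h5 (t + n * NG) (by simp [hGfull]) k (fun r => j r + n * PG)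
      (by simp [hBfull]) ih (by simp [hGfull]) (hGne _)).2
    have e1 : t + ((n + 1 : ℕ) : ℤ) * NG = (t + n * NG) + NG := by push_cast; ring
    have e2 : ∀ r : ℕ, j r + ((n + 1 : ℕ) : ℤ) * PG = (j r + n * PG) + PG := by
      intro r; push_cast; ring
    rw [e1]
    simp only [e2]
    exact h

theorem group_operation_periodicity (B G G' : Granularity T) (PG NG m : ℤ)
    (hB : IsBottom B) (hBbot : GroupsInto B G)
    (hGfull : FullInteger G) (hGu : Unbounded G)
    (hBG : GroupsPeriodicallyInto B G PG NG) (hm : 0 < m)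
    (hG'full : FullInteger G')
    (hdef : ∀ i : ℤ, G'.gran i = ⋃ j ∈ Finset.Icc ((i - 1) * m + 1) (i * m), G.gran j) :
    GroupsPeriodicallyInto B G' (PG * m / (Int.gcd m NG : ℤ)) (NG / (Int.gcd m NG : ℤ)) := by
  classical
  obtain ⟨hBfull, hBne⟩ := hB
  have hGl : G.labels = Set.univ := hGfull
  have hG'l : G'.labels = Set.univ := hG'full
  have hGne : ∀ t : ℤ, (G.gran t).Nonempty := fun t => hGu.2.2 t (by simp [hGl])
  have hPGpos : 0 < PG := hBG.2.1
  have hNGpos : 0 < NG := hBG.2.2.1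
  have h5 := hBG.2.2.2.2.1
  -- arithmetic setup
  set d : ℤ := (Int.gcd m NG : ℤ) with hd_def
  have hd0 : (0 : ℤ) < d := by
    have h : 0 < Int.gcd m NG := Int.gcd_pos_iff.mpr (Or.inl hm.ne')
    rw [hd_def]
    exact_mod_cast h
  obtain ⟨q, hq⟩ : d ∣ m := Int.gcd_dvd_left m NG
  obtain ⟨N', hN'⟩ : d ∣ NG := Int.gcd_dvd_right m NG
  have hqpos : 0 < q := by
    rcases (mul_pos_iff.mp (hq ▸ hm)) with ⟨_, h⟩ | ⟨h, _⟩
    · exact h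
    · linarith
  have hN'pos : 0 < N' := by
    rcases (mul_pos_iff.mp (hN' ▸ hNGpos)) with ⟨_, h⟩ | ⟨h, _⟩
    · exact h
    · linarith
  have hNdiv : NG / d = N' := by rw [hN', Int.mul_ediv_cancel_left _ hd0.ne']
  have hPdiv : PG * m / d = q * PG := by
    rw [hq, show PG * (d * q) = d * (q * PG) by ring, Int.mul_ediv_cancel_left _ hd0.ne']
  have hkeymul : N' * m = q * NG := by rw [hq, hN']; ring
  set qn : ℕ := q.toNat with hqn_def
  have hqn : (qn : ℤ) = q := Int.toNat_of_nonneg hqpos.le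
  -- decomposition of G's granules into B's granules
  have hdec0 : ∀ t : ℤ, ∃ S : Set ℤ, G.gran t = ⋃ s ∈ S, B.gran s := by
    intro t
    obtain ⟨S, _, hS⟩ := hBbot t (by simp [hGl]) (hGne t)
    exact ⟨S, hS⟩
  choose S hS using hdec0
  have hBd : ∀ {s s' : ℤ} {x : T}, x ∈ B.gran s → x ∈ B.gran s' → s = s' :=
    fun hx hx' => gran_disjoint_aux B hBfull hBne hx hx'
  have hkey : ∀ t : ℤ, ∀ x, x ∈ G.gran t → ∀ s : ℤ, x ∈ B.gran s →
      B.gran s ⊆ G.gran t := by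
    intro t x hx s hxs y hy
    rw [hS t] at hx ⊢
    obtain ⟨s', hs', hxs'⟩ := Set.mem_iUnion₂.mp hx
    have hss : s = s' := hBd hxs hxs'
    exact Set.mem_iUnion₂.mpr ⟨s', hs', hss ▸ hy⟩
  have hG'ne : ∀ i : ℤ, (G'.gran i).Nonempty := by
    intro i
    obtain ⟨y, hy⟩ := hGne ((i - 1) * m + 1)
    refine ⟨y, ?_⟩
    rw [hdef i]
    have hb : (i - 1) * m + 1 ≤ i * m := by nlinarith
    exact Set.mem_iUnion₂.mpr ⟨(i - 1) * m + 1, Finset.mem_Icc.mpr ⟨le_refl _, hb⟩, hy⟩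
  refine ⟨?_, ?_, ?_, ?_, ?_, ?_⟩
  · -- GroupsInto B G'
    intro i _ _
    refine ⟨⋃ t ∈ Set.Icc ((i - 1) * m + 1) (i * m), S t,
      by rw [hBfull]; exact Set.subset_univ _, ?_⟩
    rw [hdef i]
    simp only [hS]
    ext x
    simp only [Set.mem_iUnion, Finset.mem_Icc, Set.mem_Icc, exists_prop]
    constructor
    · rintro ⟨t, ht, s, hsS, hx⟩
      exact ⟨s, ⟨t, ht, hsS⟩, hx⟩
    · rintro ⟨s, ⟨t, ht, hsS⟩, hx⟩
      exact ⟨t, ht, s, hsS, hx⟩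
  · rw [hPdiv]; exact mul_pos hqpos hPGpos
  · rw [hNdiv]; exact hN'pos
  · intro i _
    left
    simp [hG'l]
  · -- periodic shift clause
    intro i _ k j _ hdecomp _ _
    refine ⟨fun r _ => by simp [hBfull], ?_⟩
    rw [hNdiv, hPdiv, hdef (i + N')]
    set a : ℤ := (i - 1) * m + 1 with ha_def
    set b : ℤ := i * m with hb_def
    have e1 : (i + N' - 1) * m + 1 = a + q * NG := by rw [← hkeymul, ha_def]; ring
    have e2 : (i + N') * m = b + q * NG := by rw [← hkeymul, hb_def]; ring
    have hsub : ∀ t ∈ Finset.Icc a b, ∀ x ∈ G.gran t,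
        ∃ r ≤ k, x ∈ B.gran (j r) ∧ B.gran (j r) ⊆ G.gran t := by
      intro t ht x hx
      have hxG' : x ∈ G'.gran i := by
        rw [hdef i]
        exact Set.mem_iUnion₂.mpr ⟨t, ht, hx⟩
      rw [hdecomp] at hxG'
      obtain ⟨r, hr, hxB⟩ := Set.mem_iUnion₂.mp hxG'
      exact ⟨r, Nat.lt_succ_iff.mp (Finset.mem_range.mp hr), hxB, hkey t x hx (j r) hxB⟩
    have hrt : ∀ r ≤ k, ∃ t ∈ Finset.Icc a b, B.gran (j r) ⊆ G.gran t := by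
      intro r hr
      obtain ⟨x, hx⟩ := hBne (j r)
      have hxG' : x ∈ G'.gran i := by
        rw [hdecomp]
        exact Set.mem_iUnion₂.mpr ⟨r, Finset.mem_range.mpr (Nat.lt_succ_iff.mpr hr), hx⟩
      rw [hdef i] at hxG'
      obtain ⟨t, ht, hxG⟩ := Set.mem_iUnion₂.mp hxG'
      exact ⟨t, ht, hkey t x hxG (j r) hx⟩
    have hchoice : ∀ t ∈ Finset.Icc a b, ∃ j' : ℕ → ℤ,
        (∀ r ≤ k, ∃ r' ≤ k, j' r = j r') ∧
        (∀ r ≤ k, B.gran (j r) ⊆ G.gran t → j' r = j r) ∧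
        G.gran t = ⋃ r ∈ Finset.range (k + 1), B.gran (j' r) := by
      intro t ht
      obtain ⟨x, hx⟩ := hGne t
      obtain ⟨r₀, hr₀, hxr₀, hsub₀⟩ := hsub t ht x hx
      refine ⟨fun r => if B.gran (j r) ⊆ G.gran t then j r else j r₀, ?_, ?_, ?_⟩
      · intro r hr
        by_cases h : B.gran (j r) ⊆ G.gran t
        · exact ⟨r, hr, by simp only [if_pos h]⟩
        · exact ⟨r₀, hr₀, by simp only [if_neg h]⟩
      · intro r _ h; simp only [if_pos h]
      · ext y
        constructor
        · intro hy
          obtain ⟨r, hr, hyB, hBsub⟩ := hsub t ht y hy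
          refine Set.mem_iUnion₂.mpr ⟨r, Finset.mem_range.mpr (Nat.lt_succ_iff.mpr hr), ?_⟩
          simp only [if_pos hBsub]; exact hyB
        · intro hy
          obtain ⟨r, _, hyB⟩ := Set.mem_iUnion₂.mp hy
          by_cases h : B.gran (j r) ⊆ G.gran t
          · simp only [if_pos h] at hyB; exact h hyB
          · simp only [if_neg h] at hyB; exact hsub₀ hyB
    choose j' hj1 hj2 hj3 using hchoice
    have hshift : ∀ t (ht : t ∈ Finset.Icc a b),
        G.gran (t + q * NG) = ⋃ r ∈ Finset.range (k + 1), B.gran (j' t ht r + q * PG) := by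
      intro t ht
      have := shift_iter_aux B G PG NG hBfull hGl hGne h5 qn t k (j' t ht) (hj3 t ht)
      rwa [hqn] at this
    ext x
    simp only [Set.mem_iUnion, Finset.mem_Icc, Finset.mem_range, exists_prop]
    constructor
    · rintro ⟨t', ⟨h1, h2⟩, hx⟩
      have ht : t' - q * NG ∈ Finset.Icc a b := by
        rw [Finset.mem_Icc]
        constructor <;> linarith
      have hx' : x ∈ G.gran ((t' - q * NG) + q * NG) := by
        rwa [sub_add_cancel]
      rw [hshift _ ht] at hx'
      obtain ⟨r, hr, hxB⟩ := Set.mem_iUnion₂.mp hx'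
      obtain ⟨r', hr', he⟩ := hj1 _ ht r (Nat.lt_succ_iff.mp (Finset.mem_range.mp hr))
      rw [he] at hxB
      exact ⟨r', Nat.lt_succ_iff.mpr hr', hxB⟩
    · rintro ⟨r, hr, hx⟩
      have hr' : r ≤ k := Nat.lt_succ_iff.mp hr
      obtain ⟨t, ht, hBsub⟩ := hrt r hr'
      refine ⟨t + q * NG, ⟨?_, ?_⟩, ?_⟩
      · have := (Finset.mem_Icc.mp ht).1; linarith
      · have := (Finset.mem_Icc.mp ht).2; linarith
      · rw [hshift t ht]
        refine Set.mem_iUnion₂.mpr ⟨r, Finset.mem_range.mpr hr, ?_⟩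
        rw [hj2 t ht r hr' hBsub]
        exact hx
  · intro s _
    exact ⟨by simp [hG'l], hG'ne _⟩
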